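/- arXiv:2308.13110 — 2 statements merged into one kernel-verified Lean document; each statement's English description precedes it below -/
import Mathlib

section
/- Let (C_n) and C be nonempty compact convex subsets of ℝ^d, and let W be a countable dense subset of the closed unit ball of ℝ^d. If s(x*, C_n) → s(x*, C) for every x* ∈ W, then C_n converges to C in the Hausdorff metric. -/
open Metric Filter

/-- Support function of a set `C ⊆ ℝ^d`. -/
noncomputable def suppFn {d : ℕ} (y : EuclideanSpace ℝ (Fin d))
    (C : Set (EuclideanSpace ℝ (Fin d))) : ℝ :=
  sSup ((fun x => (inner ℝ y x : ℝ)) '' C)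

section Aux

variable {d : ℕ}

lemma bddAbove_inner_image {K : Set (EuclideanSpace ℝ (Fin d))} (hK : IsCompact K)
    (y : EuclideanSpace ℝ (Fin d)) :
    BddAbove ((fun x => (inner ℝ y x : ℝ)) '' K) :=
  (hK.image (continuous_const.inner continuous_id)).bddAbove

lemma inner_le_suppFn {K : Set (EuclideanSpace ℝ (Fin d))} (hK : IsCompact K)
    {x : EuclideanSpace ℝ (Fin d)} (hx : x ∈ K) (y : EuclideanSpace ℝ (Fin d)) :
    (inner ℝ y x : ℝ) ≤ suppFn y K :=
  le_csSup (bddAbove_inner_image hK y) (Set.mem_image_of_mem _ hx)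

lemma suppFn_le {K : Set (EuclideanSpace ℝ (Fin d))} (hKne : K.Nonempty)
    {y : EuclideanSpace ℝ (Fin d)} {c : ℝ} (h : ∀ x ∈ K, (inner ℝ y x : ℝ) ≤ c) :
    suppFn y K ≤ c :=
  csSup_le (hKne.image _) (by rintro _ ⟨x, hx, rfl⟩; exact h x hx)

lemma suppFn_le_norm_mul {K : Set (EuclideanSpace ℝ (Fin d))} (hKne : K.Nonempty)
    {R : ℝ} (hKR : K ⊆ closedBall 0 R) (y : EuclideanSpace ℝ (Fin d)) :
    suppFn y K ≤ ‖y‖ * R := by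
  refine suppFn_le hKne fun x hx => ?_
  calc (inner ℝ y x : ℝ) ≤ ‖y‖ * ‖x‖ := real_inner_le_norm y x
    _ ≤ ‖y‖ * R := by
        have := hKR hx
        simp only [mem_closedBall, dist_zero_right] at this
        exact mul_le_mul_of_nonneg_left this (norm_nonneg y)

lemma suppFn_lipschitz {K : Set (EuclideanSpace ℝ (Fin d))} (hKne : K.Nonempty)
    (hKcp : IsCompact K) {R : ℝ} (hKR : K ⊆ closedBall 0 R)
    (y y' : EuclideanSpace ℝ (Fin d)) :
    suppFn y K ≤ suppFn y' K + R * ‖y - y'‖ := by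
  refine suppFn_le hKne fun x hx => ?_
  have h1 : (inner ℝ y x : ℝ) = (inner ℝ y' x : ℝ) + (inner ℝ (y - y') x : ℝ) := by
    rw [inner_sub_left]; ring
  have h2 : (inner ℝ (y - y') x : ℝ) ≤ ‖y - y'‖ * ‖x‖ := real_inner_le_norm _ _
  have h3 : ‖x‖ ≤ R := by simpa [mem_closedBall, dist_zero_right] using hKR hx
  have h4 : ‖y - y'‖ * ‖x‖ ≤ R * ‖y - y'‖ := by
    rw [mul_comm]
    exact mul_le_mul_of_nonneg_right h3 (norm_nonneg _)
  linarith [inner_le_suppFn hKcp hx y']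

lemma mem_cthickening_of_suppFn {K : Set (EuclideanSpace ℝ (Fin d))}
    (hKne : K.Nonempty) (hKcv : Convex ℝ K) {ε : ℝ} (hε : 0 < ε)
    {x : EuclideanSpace ℝ (Fin d)}
    (hx : ∀ y : EuclideanSpace ℝ (Fin d), ‖y‖ = 1 → (inner ℝ y x : ℝ) ≤ suppFn y K + ε) :
    x ∈ cthickening ε K := by
  by_contra hxK
  obtain ⟨f, u, hfa, hfx⟩ :=
    geometric_hahn_banach_closed_point (hKcv.cthickening ε) isClosed_cthickening hxK
  set y : EuclideanSpace ℝ (Fin d) :=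
    (InnerProductSpace.toDual ℝ (EuclideanSpace ℝ (Fin d))).symm f with hy
  have hyf : ∀ z, (inner ℝ y z : ℝ) = f z := fun z => InnerProductSpace.toDual_symm_apply
  have hy0 : y ≠ 0 := by
    rintro h0
    obtain ⟨a, ha⟩ := hKne
    have haK : a ∈ cthickening ε K := self_subset_cthickening _ ha
    have h1 := hfa a haK
    have h2 : f a = (inner ℝ y a : ℝ) := (hyf a).symm
    have h3 : f x = (inner ℝ y x : ℝ) := (hyf x).symm
    rw [h0] at h2 h3
    simp [inner_zero_left] at h2 h3
    linarith
  have hny : (0 : ℝ) < ‖y‖ := norm_pos_iff.2 hy0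
  set w : EuclideanSpace ℝ (Fin d) := ‖y‖⁻¹ • y with hw
  have hnw : ‖w‖ = 1 := by
    rw [hw, norm_smul, norm_inv, norm_norm, inv_mul_cancel₀ hny.ne']
  have key : ∀ a ∈ K, (inner ℝ w a : ℝ) + ε ≤ u / ‖y‖ := by
    intro a ha
    have hmem : a + ε • w ∈ cthickening ε K := by
      apply mem_cthickening_of_dist_le _ a _ _ ha
      rw [dist_eq_norm]
      simp [norm_smul, hnw, abs_of_pos hε]
    have h1 : f (a + ε • w) < u := hfa _ hmem
    have h2 : (inner ℝ y (a + ε • w) : ℝ) = (inner ℝ y a : ℝ) + ε * ‖y‖ := by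
      rw [inner_add_right, inner_smul_right, hw, real_inner_smul_right,
        real_inner_self_eq_norm_sq]
      field_simp
    have h3 : (inner ℝ y a : ℝ) + ε * ‖y‖ < u := by rw [← h2, hyf]; exact h1
    have h4 : (inner ℝ w a : ℝ) = (inner ℝ y a : ℝ) / ‖y‖ := by
      rw [hw, real_inner_smul_left]; field_simp
    rw [h4]
    rw [div_add' _ _ _ hny.ne', div_le_div_iff_of_pos_right hny]
    nlinarith
  have hsupp : suppFn w K + ε ≤ u / ‖y‖ := by
    have := suppFn_le hKne (y := w) (c := u / ‖y‖ - ε) (fun a ha => by linarith [key a ha])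
    linarith
  have hxw : u / ‖y‖ < (inner ℝ w x : ℝ) := by
    have h3 : (inner ℝ w x : ℝ) = f x / ‖y‖ := by
      rw [hw, real_inner_smul_left, hyf]; field_simp
    rw [h3]
    exact div_lt_div_of_pos_right hfx hny
  linarith [hx w hnw]

lemma exists_dist_le_of_mem_cthickening {K : Set (EuclideanSpace ℝ (Fin d))}
    (hKcp : IsCompact K) (hKne : K.Nonempty) {ε : ℝ} (hε : 0 ≤ ε)
    {x : EuclideanSpace ℝ (Fin d)} (hx : x ∈ cthickening ε K) :
    ∃ z ∈ K, dist x z ≤ ε := by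
  obtain ⟨z, hz, hd⟩ := hKcp.exists_infDist_eq_dist hKne x
  refine ⟨z, hz, ?_⟩
  rw [← hd]
  exact ENNReal.toReal_le_of_le_ofReal hε (mem_cthickening_iff.1 hx)

end Aux

/-- For nonempty compact convex sets, scalar convergence of support functions on a countable
dense subset of the closed unit ball implies Hausdorff convergence. -/
theorem stmt_4 {d : ℕ} (C : ℕ → Set (EuclideanSpace ℝ (Fin d)))
    (L : Set (EuclideanSpace ℝ (Fin d)))
    (hne : ∀ n, (C n).Nonempty) (hcp : ∀ n, IsCompact (C n)) (hcv : ∀ n, Convex ℝ (C n))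
    (hLne : L.Nonempty) (hLcp : IsCompact L) (hLcv : Convex ℝ L)
    (W : Set (EuclideanSpace ℝ (Fin d))) (hWc : W.Countable)
    (hWs : W ⊆ closedBall (0 : EuclideanSpace ℝ (Fin d)) 1)
    (hWd : closedBall (0 : EuclideanSpace ℝ (Fin d)) 1 ⊆ closure W)
    (hconv : ∀ y ∈ W, Tendsto (fun n => suppFn y (C n)) atTop (nhds (suppFn y L))) :
    Tendsto (fun n => hausdorffDist (C n) L) atTop (nhds 0) := by
  have key : ∀ ε : ℝ, 0 < ε → ∀ᶠ n in atTop, hausdorffDist (C n) L ≤ ε := by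
    intro ε hε
    -- bound for L
    obtain ⟨r, hr⟩ := hLcp.isBounded.subset_closedBall 0
    set RL : ℝ := max r 1 with hRLdef
    have hRL1 : (1 : ℝ) ≤ RL := le_max_right _ _
    have hLsub : L ⊆ closedBall 0 RL :=
      hr.trans (closedBall_subset_closedBall (le_max_left _ _))
    set R : ℝ := 2 * (RL + 1) with hRdef
    have hR0 : (0 : ℝ) < R := by nlinarith
    have hLsubR : L ⊆ closedBall 0 R :=
      hLsub.trans (closedBall_subset_closedBall (by nlinarith))
    -- finite covers from W
    have hcover : ∀ θ : ℝ, 0 < θ → ∃ F ⊆ W, F.Finite ∧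
        closedBall (0 : EuclideanSpace ℝ (Fin d)) 1 ⊆ ⋃ w ∈ F, ball w θ := by
      intro θ hθ
      refine (isCompact_closedBall (0 : EuclideanSpace ℝ (Fin d)) 1).elim_finite_subcover_image
        (fun w _ => isOpen_ball) ?_
      intro z hz
      obtain ⟨w, hwW, hw⟩ := Metric.mem_closure_iff.1 (hWd hz) θ hθ
      exact Set.mem_biUnion hwW (mem_ball.2 hw)
    obtain ⟨F₀, hF₀W, hF₀fin, hF₀cov⟩ := hcover (1 / 2) (by norm_num)
    set δ : ℝ := ε / (4 * R) with hδdef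
    have hδ0 : 0 < δ := by positivity
    obtain ⟨F, hFW, hFfin, hFcov⟩ := hcover δ hδ0
    -- eventual facts
    have ev1 : ∀ᶠ n in atTop, ∀ w ∈ F₀, suppFn w (C n) ≤ RL + 1 := by
      rw [eventually_all_finite hF₀fin]
      intro w hw
      have hwn : ‖w‖ ≤ 1 := by
        simpa [mem_closedBall, dist_zero_right] using hWs (hF₀W hw)
      have hwle : suppFn w L < RL + 1 := by
        have h1 := suppFn_le_norm_mul hLne hLsub w
        nlinarith [norm_nonneg w]
      exact ((hconv w (hF₀W hw)).eventually_lt_const hwle).mono fun n hn => hn.le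
    have ev2 : ∀ᶠ n in atTop, ∀ w ∈ F, |suppFn w (C n) - suppFn w L| ≤ ε / 4 := by
      rw [eventually_all_finite hFfin]
      intro w hw
      have h := Metric.tendsto_nhds.1 (hconv w (hFW hw)) (ε / 4) (by positivity)
      exact h.mono fun n hn => by rw [Real.dist_eq] at hn; exact hn.le
    filter_upwards [ev1, ev2] with n h1 h2
    -- C n is contained in the ball of radius R
    have hCb : C n ⊆ closedBall 0 R := by
      intro x hx
      rw [mem_closedBall, dist_zero_right]
      rcases eq_or_ne x 0 with rfl | hx0
      · simp [hR0.le]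
      have hnx : (0 : ℝ) < ‖x‖ := norm_pos_iff.2 hx0
      set y : EuclideanSpace ℝ (Fin d) := ‖x‖⁻¹ • x with hydef
      have hny : ‖y‖ = 1 := by
        rw [hydef, norm_smul, norm_inv, norm_norm, inv_mul_cancel₀ hnx.ne']
      have hyB : y ∈ closedBall (0 : EuclideanSpace ℝ (Fin d)) 1 := by
        simp [mem_closedBall, dist_zero_right, hny]
      obtain ⟨w, hwF, hyw⟩ := Set.mem_iUnion₂.1 (hF₀cov hyB)
      have hyx : (inner ℝ y x : ℝ) = ‖x‖ := by
        rw [hydef, real_inner_smul_left, real_inner_self_eq_norm_sq]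
        field_simp
      have hdiff : (inner ℝ (y - w) x : ℝ) ≤ (1 / 2) * ‖x‖ := by
        have := real_inner_le_norm (y - w) x
        have hywn : ‖y - w‖ ≤ 1 / 2 := by
          rw [← dist_eq_norm]; exact (mem_ball.1 hyw).le
        nlinarith
      have hwx : ‖x‖ / 2 ≤ (inner ℝ w x : ℝ) := by
        have : (inner ℝ w x : ℝ) = (inner ℝ y x : ℝ) - (inner ℝ (y - w) x : ℝ) := by
          rw [inner_sub_left]; ring
        rw [this, hyx]; linarith
      have := (inner_le_suppFn (hcp n) hx w).trans (h1 w hwF)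
      nlinarith
    -- comparison of support functions at all unit vectors
    have hcmp : ∀ y : EuclideanSpace ℝ (Fin d), ‖y‖ = 1 →
        suppFn y (C n) ≤ suppFn y L + ε ∧ suppFn y L ≤ suppFn y (C n) + ε := by
      intro y hy
      have hyB : y ∈ closedBall (0 : EuclideanSpace ℝ (Fin d)) 1 := by
        simp [mem_closedBall, dist_zero_right, hy]
      obtain ⟨w, hwF, hyw⟩ := Set.mem_iUnion₂.1 (hFcov hyB)
      have hd : ‖y - w‖ ≤ δ := by rw [← dist_eq_norm]; exact (mem_ball.1 hyw).le
      have hd' : ‖w - y‖ ≤ δ := by rwa [norm_sub_rev]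
      have hRδ : R * δ = ε / 4 := by
        rw [hδdef]; field_simp
      have c := h2 w hwF
      rw [abs_sub_le_iff] at c
      have a1 := suppFn_lipschitz (hne n) (hcp n) hCb y w
      have a2 := suppFn_lipschitz (hne n) (hcp n) hCb w y
      have b1 := suppFn_lipschitz hLne hLcp hLsubR y w
      have b2 := suppFn_lipschitz hLne hLcp hLsubR w y
      have m1 : R * ‖y - w‖ ≤ ε / 4 := by
        rw [← hRδ]; exact mul_le_mul_of_nonneg_left hd hR0.le
      have m2 : R * ‖w - y‖ ≤ ε / 4 := by
        rw [← hRδ]; exact mul_le_mul_of_nonneg_left hd' hR0.le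
      constructor <;> [skip; skip] <;>
        · obtain ⟨c1, c2⟩ := c
          linarith
    -- the two inclusions
    have hs1 : C n ⊆ cthickening ε L := fun x hx =>
      mem_cthickening_of_suppFn hLne hLcv hε fun y hy =>
        (inner_le_suppFn (hcp n) hx y).trans (hcmp y hy).1
    have hs2 : L ⊆ cthickening ε (C n) := fun x hx =>
      mem_cthickening_of_suppFn (hne n) (hcv n) hε fun y hy =>
        (inner_le_suppFn hLcp hx y).trans (hcmp y hy).2
    refine hausdorffDist_le_of_mem_dist hε.le ?_ ?_
    · intro x hx
      exact exists_dist_le_of_mem_cthickening hLcp hLne hε.le (hs1 hx)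
    · intro x hx
      obtain ⟨z, hz, hd⟩ :=
        exists_dist_le_of_mem_cthickening (hcp n) (hne n) hε.le (hs2 hx)
      exact ⟨z, hz, hd⟩
  rw [Metric.tendsto_atTop]
  intro ε hε
  obtain ⟨N, hN⟩ := eventually_atTop.1 (key (ε / 2) (by positivity))
  refine ⟨N, fun n hn => ?_⟩
  rw [Real.dist_eq, sub_zero, abs_of_nonneg hausdorffDist_nonneg]
  linarith [hN n hn]
end

section
/- Let (Ω, F, P) be a probability space, G a sub-σ-algebra of F, p ≥ 1, and K a nonempty subset of L^p(Ω, G; ℝ^d). Then K is dominated in L^p (i.e., there exists ξ ∈ L^p(Ω; ℝ) with |ζ| ≤ ξ a.s. for all ζ ∈ K) if and only if the G-decomposable hull dec_G(K) is bounded in L^p (i.e., sup over its elements of E[|·|^p] is finite). -/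
open MeasureTheory ENNReal

/-- The `G`-decomposable hull of a set `K` of functions: finite sums `∑ᵢ ξⁱ 1_{Aᵢ}` over
`G`-measurable finite partitions of `Ω` with `ξⁱ ∈ K`. -/
def decHull {Ω E : Type*} [AddCommMonoid E] (G : MeasurableSpace Ω)
    (K : Set (Ω → E)) : Set (Ω → E) :=
  { g | ∃ (n : ℕ) (ξ : Fin n → Ω → E) (A : Fin n → Set Ω),
      (∀ i, ξ i ∈ K) ∧ (∀ i, MeasurableSet[G] (A i)) ∧
      Pairwise (Function.onFun Disjoint A) ∧ (⋃ i, A i) = Set.univ ∧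
      g = fun ω => ∑ i, (A i).indicator (ξ i) ω }

theorem mem_decHull_self' {Ω E : Type*} [AddCommMonoid E] (G : MeasurableSpace Ω)
    {K : Set (Ω → E)} {f : Ω → E} (hf : f ∈ K) : f ∈ decHull G K := by
  refine ⟨1, fun _ => f, fun _ => Set.univ, fun _ => hf, fun _ => MeasurableSet.univ,
    fun i j hij => absurd (Subsingleton.elim i j) hij, by rw [Set.iUnion_const], ?_⟩
  funext ω; simp

theorem decHull_sm' {Ω E : Type*} [AddCommMonoid E] [TopologicalSpace E] [ContinuousAdd E]
    {G : MeasurableSpace Ω} {K : Set (Ω → E)} (hK : ∀ f ∈ K, StronglyMeasurable[G] f)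
    {g : Ω → E} (hg : g ∈ decHull G K) : StronglyMeasurable[G] g := by
  obtain ⟨n, ξ, A, hξ, hA, -, -, rfl⟩ := hg
  exact Finset.stronglyMeasurable_fun_sum _ fun i _ => ((hK _ (hξ i)).indicator (hA i))

theorem piecewise_mem_decHull' {Ω E : Type*} [AddCommMonoid E] {G : MeasurableSpace Ω}
    {K : Set (Ω → E)} {g₁ g₂ : Ω → E} (h₁ : g₁ ∈ decHull G K) (h₂ : g₂ ∈ decHull G K)
    {B : Set Ω} [DecidablePred (· ∈ B)] (hB : MeasurableSet[G] B) : B.piecewise g₁ g₂ ∈ decHull G K := by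
  classical
  obtain ⟨n, ξ, A, hξ, hA, hdisj, hcov, rfl⟩ := h₁
  obtain ⟨m, ξ', A', hξ', hA', hdisj', hcov', rfl⟩ := h₂
  refine ⟨n + m, Fin.append ξ ξ', Fin.append (fun i => A i ∩ B) (fun j => A' j ∩ Bᶜ),
    ?_, ?_, ?_, ?_, ?_⟩
  · intro k
    refine Fin.addCases (motive := fun k => Fin.append ξ ξ' k ∈ K) (fun i => ?_) (fun j => ?_) k
    · simp only [Fin.append_left]; exact hξ i
    · simp only [Fin.append_right]; exact hξ' j
  · intro k
    refine Fin.addCases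
      (motive := fun k => MeasurableSet[G]
        (Fin.append (fun i => A i ∩ B) (fun j => A' j ∩ Bᶜ) k)) (fun i => ?_) (fun j => ?_) k
    · simp only [Fin.append_left]; exact (hA i).inter hB
    · simp only [Fin.append_right]; exact (hA' j).inter hB.compl
  · intro k l hkl
    refine Fin.addCases (motive := fun k => k ≠ l →
        Function.onFun Disjoint (Fin.append (fun i => A i ∩ B) (fun j => A' j ∩ Bᶜ)) k l)
      (fun i hil => ?_) (fun j hjl => ?_) k hkl
    · refine Fin.addCases (motive := fun l => Fin.castAdd m i ≠ l →
          Function.onFun Disjoint (Fin.append (fun i => A i ∩ B) (fun j => A' j ∩ Bᶜ))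
            (Fin.castAdd m i) l) (fun i' hii' => ?_) (fun j' _ => ?_) l hil
      · simp only [Function.onFun, Fin.append_left]
        exact (hdisj fun h => hii' (congrArg _ h)).mono Set.inter_subset_left
          Set.inter_subset_left
      · simp only [Function.onFun, Fin.append_left, Fin.append_right]
        exact (disjoint_compl_right (a := B)).mono Set.inter_subset_right Set.inter_subset_right
    · refine Fin.addCases (motive := fun l => Fin.natAdd n j ≠ l →
          Function.onFun Disjoint (Fin.append (fun i => A i ∩ B) (fun j => A' j ∩ Bᶜ))
            (Fin.natAdd n j) l) (fun i' _ => ?_) (fun j' hjj' => ?_) l hjl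
      · simp only [Function.onFun, Fin.append_right, Fin.append_left]
        exact (disjoint_compl_left (a := B)).mono Set.inter_subset_right Set.inter_subset_right
      · simp only [Function.onFun, Fin.append_right]
        exact (hdisj' fun h => hjj' (congrArg _ h)).mono Set.inter_subset_left
          Set.inter_subset_left
  · ext ω
    simp only [Set.mem_iUnion, Set.mem_univ, iff_true]
    by_cases hω : ω ∈ B
    · have : ω ∈ ⋃ i, A i := hcov ▸ Set.mem_univ ω
      obtain ⟨i, hi⟩ := Set.mem_iUnion.mp this
      refine ⟨Fin.castAdd m i, ?_⟩
      simp only [Fin.append_left]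
      exact ⟨hi, hω⟩
    · have : ω ∈ ⋃ j, A' j := hcov' ▸ Set.mem_univ ω
      obtain ⟨j, hj⟩ := Set.mem_iUnion.mp this
      refine ⟨Fin.natAdd n j, ?_⟩
      simp only [Fin.append_right]
      exact ⟨hj, hω⟩
  · funext ω
    rw [Fin.sum_univ_add]
    simp only [Fin.append_left, Fin.append_right]
    by_cases hω : ω ∈ B
    · rw [Set.piecewise_eq_of_mem _ _ _ hω]
      have h2 : ∀ j : Fin m, (A' j ∩ Bᶜ).indicator (ξ' j) ω = 0 := fun j =>
        Set.indicator_of_notMem (fun h => h.2 hω) _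
      have h1 : ∀ i : Fin n, (A i ∩ B).indicator (ξ i) ω = (A i).indicator (ξ i) ω := fun i => by
        by_cases hA : ω ∈ A i
        · rw [Set.indicator_of_mem (Set.mem_inter hA hω), Set.indicator_of_mem hA]
        · rw [Set.indicator_of_notMem (fun h => hA h.1), Set.indicator_of_notMem hA]
      simp only [h1, h2, Finset.sum_const_zero, add_zero]
    · rw [Set.piecewise_eq_of_notMem _ _ _ hω]
      have h1 : ∀ i : Fin n, (A i ∩ B).indicator (ξ i) ω = 0 := fun i =>
        Set.indicator_of_notMem (fun h => hω h.2) _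
      have h2 : ∀ j : Fin m, (A' j ∩ Bᶜ).indicator (ξ' j) ω = (A' j).indicator (ξ' j) ω :=
        fun j => by
        by_cases hA : ω ∈ A' j
        · rw [Set.indicator_of_mem (Set.mem_inter hA hω), Set.indicator_of_mem hA]
        · rw [Set.indicator_of_notMem (fun h => hA h.1), Set.indicator_of_notMem hA]
      simp only [h1, h2, Finset.sum_const_zero, zero_add]

theorem ennnorm_le_of_norm_le' {E F : Type*} [SeminormedAddCommGroup E]
    [SeminormedAddCommGroup F] {x : E} {y : F} (h : ‖x‖ ≤ ‖y‖) :
    (‖x‖₊ : ℝ≥0∞) ≤ (‖y‖₊ : ℝ≥0∞) :=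
  ENNReal.coe_le_coe.2 (by rwa [← NNReal.coe_le_coe, coe_nnnorm, coe_nnnorm])

theorem lint_iSup_rpow' {Ω : Type*} {mΩ : MeasurableSpace Ω} {μ : Measure Ω} {p : ℝ} (hp : 0 < p)
    {F : ℕ → Ω → ℝ≥0∞} (hmeas : ∀ n, Measurable (F n)) (hmono : ∀ n ω, F n ω ≤ F (n + 1) ω) :
    ∫⁻ ω, (⨆ n, F n ω) ^ p ∂μ = ⨆ n, ∫⁻ ω, (F n ω) ^ p ∂μ := by
  have hmono' : ∀ ω, Monotone fun n => F n ω := fun ω =>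
    monotone_nat_of_le_succ fun n => hmono n ω
  have key : ∀ ω : Ω, (⨆ n, F n ω) ^ p = ⨆ n, (F n ω) ^ p := fun ω =>
    Monotone.map_iSup_of_continuousAt (ENNReal.continuous_rpow_const.continuousAt)
      (ENNReal.monotone_rpow_of_nonneg hp.le) (by simp [ENNReal.zero_rpow_of_pos hp])
  simp_rw [key]
  exact lintegral_iSup (fun n => ENNReal.continuous_rpow_const.measurable.comp (hmeas n))
    (fun n m h ω => ENNReal.rpow_le_rpow (hmono' ω h) hp.le)

/-- A nonempty set `K ⊆ L^p(Ω, G; ℝ^d)` is dominated in `L^p` iff its `G`-decomposable hull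
is bounded in `L^p`. -/
theorem stmt_6 {Ω : Type*} {mΩ : MeasurableSpace Ω} {μ : Measure Ω} [IsProbabilityMeasure μ]
    {d : ℕ} (G : MeasurableSpace Ω) (hG : G ≤ mΩ) (p : ℝ) (hp : 1 ≤ p)
    (K : Set (Ω → EuclideanSpace ℝ (Fin d))) (hKne : K.Nonempty)
    (hKmeas : ∀ f ∈ K, StronglyMeasurable[G] f)
    (hKLp : ∀ f ∈ K, MemLp f (ENNReal.ofReal p) μ) :
    (∃ ξ : Ω → ℝ, MemLp ξ (ENNReal.ofReal p) μ ∧ ∀ ζ ∈ K, ∀ᵐ ω ∂μ, ‖ζ ω‖ ≤ ξ ω) ↔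
    (∃ M : ℝ≥0∞, M ≠ ⊤ ∧ ∀ g ∈ decHull G K, ∫⁻ ω, (‖g ω‖₊ : ℝ≥0∞) ^ p ∂μ ≤ M) := by
  classical
  have hp0 : (0 : ℝ) < p := lt_of_lt_of_le one_pos hp
  have hq0 : ENNReal.ofReal p ≠ 0 := by
    simp [ENNReal.ofReal_eq_zero, not_le, hp0]
  have hqtop : ENNReal.ofReal p ≠ ⊤ := ENNReal.ofReal_ne_top
  have hqto : (ENNReal.ofReal p).toReal = p := ENNReal.toReal_ofReal hp0.le
  constructor
  · rintro ⟨ξb, hξLp, hdom⟩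
    refine ⟨∫⁻ ω, (‖ξb ω‖₊ : ℝ≥0∞) ^ p ∂μ, ?_, ?_⟩
    · have h := hξLp.2
      rw [eLpNorm_eq_lintegral_rpow_enorm_toReal hq0 hqtop, hqto] at h
      intro htop
      rw [show ∫⁻ x, ‖ξb x‖ₑ ^ p ∂μ = ⊤ from htop, ENNReal.top_rpow_of_pos (by positivity)] at h
      exact (lt_irrefl _ h).elim
    · rintro g ⟨n, ζ, A, hζ, hA, hdisj, hcov, rfl⟩
      have hae : ∀ᵐ ω ∂μ, ∀ i, ‖ζ i ω‖ ≤ ξb ω := by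
        rw [MeasureTheory.ae_all_iff]
        exact fun i => hdom _ (hζ i)
      refine lintegral_mono_ae ?_
      filter_upwards [hae] with ω hω
      have : ω ∈ ⋃ i, A i := hcov ▸ Set.mem_univ ω
      obtain ⟨i, hi⟩ := Set.mem_iUnion.mp this
      have hsum : ∑ j, (A j).indicator (ζ j) ω = ζ i ω := by
        rw [Finset.sum_eq_single_of_mem i (Finset.mem_univ i)]
        · exact Set.indicator_of_mem hi _
        · intro j _ hj
          exact Set.indicator_of_notMem (Set.disjoint_left.mp (hdisj hj) · hi) _
      rw [hsum]
      refine ENNReal.rpow_le_rpow ?_ hp0.le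
      exact ennnorm_le_of_norm_le' ((hω i).trans ((le_abs_self _).trans_eq
        (Real.norm_eq_abs _).symm))
  · rintro ⟨M, hM, hbound⟩
    set I : (Ω → EuclideanSpace ℝ (Fin d)) → ℝ≥0∞ :=
      fun g => ∫⁻ ω, (‖g ω‖₊ : ℝ≥0∞) ^ p ∂μ with hI
    set s : ℝ≥0∞ := ⨆ g ∈ decHull G K, I g with hs
    have hsM : s ≤ M := iSup₂_le fun g hg => hbound g hg
    have hs_top : s ≠ ⊤ := (hsM.trans_lt hM.lt_top).ne
    obtain ⟨f₀, hf₀⟩ := hKne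
    have hf₀d : f₀ ∈ decHull G K := mem_decHull_self' G hf₀
    have hIs : ∀ g ∈ decHull G K, I g ≤ s := fun g hg => le_iSup₂ (f := fun g _ => I g) g hg
    -- choose an almost-maximizing sequence
    have hchoice : ∀ n : ℕ, ∃ g ∈ decHull G K, s - ((n : ℝ≥0∞) + 1)⁻¹ ≤ I g := by
      intro n
      rcases eq_or_ne (s - ((n : ℝ≥0∞) + 1)⁻¹) 0 with h0 | h0
      · exact ⟨f₀, hf₀d, by rw [h0]; exact zero_le⟩
      · have hs0 : s ≠ 0 := fun h => h0 (by rw [h, zero_tsub])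
        have hlt : s - ((n : ℝ≥0∞) + 1)⁻¹ < s :=
          ENNReal.sub_lt_self hs_top hs0 (ENNReal.inv_ne_zero.2 (by simp))
        rw [hs] at hlt
        obtain ⟨g, hx⟩ := lt_iSup_iff.mp hlt
        obtain ⟨hg, hx⟩ := lt_iSup_iff.mp hx
        exact ⟨g, hg, hx.le⟩
    choose g hgmem hgI using hchoice
    -- iterated "norm-maximizing" pasting
    set φ : ℕ → Ω → EuclideanSpace ℝ (Fin d) := fun n => Nat.rec (g 0)
      (fun n φn => Set.piecewise {ω | ‖g (n + 1) ω‖ ≤ ‖φn ω‖} φn (g (n + 1))) n with hφ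
    have hφsucc : ∀ n, φ (n + 1) =
        Set.piecewise {ω | ‖g (n + 1) ω‖ ≤ ‖φ n ω‖} (φ n) (g (n + 1)) := fun n => rfl
    have hφmem : ∀ n, φ n ∈ decHull G K := by
      intro n
      induction n with
      | zero => exact hgmem 0
      | succ n ih =>
        rw [hφsucc]
        refine piecewise_mem_decHull' ih (hgmem (n + 1)) ?_
        exact measurableSet_le ((decHull_sm' hKmeas (hgmem (n + 1))).norm.measurable)
          ((decHull_sm' hKmeas ih).norm.measurable)
    have hφnorm : ∀ n ω, ‖φ (n + 1) ω‖ = max ‖φ n ω‖ ‖g (n + 1) ω‖ := by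
      intro n ω
      rw [hφsucc]
      by_cases h : ‖g (n + 1) ω‖ ≤ ‖φ n ω‖
      · rw [Set.piecewise_eq_of_mem {ω | ‖g (n + 1) ω‖ ≤ ‖φ n ω‖} _ _ h, max_eq_left h]
      · rw [Set.piecewise_eq_of_notMem {ω | ‖g (n + 1) ω‖ ≤ ‖φ n ω‖} _ _ h,
          max_eq_right (le_of_not_ge h)]
    have hφmono : ∀ n ω, ‖φ n ω‖ ≤ ‖φ (n + 1) ω‖ := fun n ω => by
      rw [hφnorm]; exact le_max_left _ _
    have hgφ : ∀ n ω, ‖g n ω‖ ≤ ‖φ n ω‖ := by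
      intro n
      cases n with
      | zero => exact fun ω => le_refl _
      | succ n => intro ω; rw [hφnorm]; exact le_max_right _ _
    have hφm : ∀ n, Measurable[mΩ] fun ω => (‖φ n ω‖₊ : ℝ≥0∞) := fun n =>
      (decHull_sm' hKmeas (hφmem n)).measurable.nnnorm.coe_nnreal_ennreal.mono hG le_rfl
    set Φ : Ω → ℝ≥0∞ := fun ω => ⨆ n, (‖φ n ω‖₊ : ℝ≥0∞) with hΦdef
    have hΦm : Measurable[mΩ] Φ := Measurable.iSup hφm
    have hIΦ : ∫⁻ ω, Φ ω ^ p ∂μ = ⨆ n, I (φ n) :=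
      lint_iSup_rpow' hp0 hφm fun n ω => ennnorm_le_of_norm_le' (hφmono n ω)
    have hIΦ_le : ∫⁻ ω, Φ ω ^ p ∂μ ≤ s := by
      rw [hIΦ]; exact iSup_le fun n => hIs _ (hφmem n)
    have hs_le : s ≤ ∫⁻ ω, Φ ω ^ p ∂μ := by
      set T := ∫⁻ ω, Φ ω ^ p ∂μ with hT
      refine ENNReal.le_of_forall_pos_le_add fun ε hε hT_top => ?_
      obtain ⟨n, hn⟩ := ENNReal.exists_inv_nat_lt (a := (ε : ℝ≥0∞))
        (by exact_mod_cast hε.ne')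
      have h1 : s - ((n : ℝ≥0∞) + 1)⁻¹ ≤ T := by
        refine (hgI n).trans ?_
        refine le_trans (lintegral_mono fun ω => ENNReal.rpow_le_rpow
          (ennnorm_le_of_norm_le' (hgφ n ω)) hp0.le) ?_
        rw [hIΦ]
        exact le_iSup (fun n => I (φ n)) n
      have h2 : s ≤ T + ((n : ℝ≥0∞) + 1)⁻¹ := tsub_le_iff_right.mp h1
      refine h2.trans (add_le_add_right ?_ T)
      refine le_trans (ENNReal.inv_le_inv.2 (le_add_of_nonneg_right zero_le_one)) hn.le
    have hΦeq : ∫⁻ ω, Φ ω ^ p ∂μ = s := le_antisymm hIΦ_le hs_le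
    have hΦfin : ∫⁻ ω, Φ ω ^ p ∂μ ≠ ⊤ := by rw [hΦeq]; exact hs_top
    have hΦpm : Measurable[mΩ] fun ω => Φ ω ^ p :=
      ENNReal.continuous_rpow_const.measurable.comp hΦm
    have hΦlt : ∀ᵐ ω ∂μ, Φ ω < ⊤ := by
      filter_upwards [ae_lt_top hΦpm hΦfin] with ω hω
      rw [lt_top_iff_ne_top]
      intro h
      rw [h, ENNReal.top_rpow_of_pos hp0] at hω
      exact (lt_irrefl _ hω).elim
    -- domination
    have hdom : ∀ ζ ∈ K, ∀ᵐ ω ∂μ, (‖ζ ω‖₊ : ℝ≥0∞) ≤ Φ ω := by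
      intro ζ hζ
      have hζd : ζ ∈ decHull G K := mem_decHull_self' G hζ
      set ψ : ℕ → Ω → EuclideanSpace ℝ (Fin d) :=
        fun n => Set.piecewise {ω | ‖ζ ω‖ ≤ ‖φ n ω‖} (φ n) ζ with hψdef
      have hψmem : ∀ n, ψ n ∈ decHull G K := fun n =>
        piecewise_mem_decHull' (hφmem n) hζd
          (measurableSet_le ((hKmeas ζ hζ).norm.measurable)
            ((decHull_sm' hKmeas (hφmem n)).norm.measurable))
      have hψnorm : ∀ n ω, ‖ψ n ω‖ = max ‖φ n ω‖ ‖ζ ω‖ := by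
        intro n ω
        by_cases h : ‖ζ ω‖ ≤ ‖φ n ω‖
        · simp only [hψdef]
          rw [Set.piecewise_eq_of_mem {ω | ‖ζ ω‖ ≤ ‖φ n ω‖} _ _ h, max_eq_left h]
        · simp only [hψdef]
          rw [Set.piecewise_eq_of_notMem {ω | ‖ζ ω‖ ≤ ‖φ n ω‖} _ _ h,
            max_eq_right (le_of_not_ge h)]
      have hψennnorm : ∀ n ω, (‖ψ n ω‖₊ : ℝ≥0∞) = max (‖φ n ω‖₊ : ℝ≥0∞) (‖ζ ω‖₊ : ℝ≥0∞) := by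
        intro n ω
        rw [← ENNReal.coe_max]
        congr 1
        apply NNReal.coe_injective
        simp [coe_nnnorm, hψnorm n ω]
      have hψm : ∀ n, Measurable[mΩ] fun ω => (‖ψ n ω‖₊ : ℝ≥0∞) := fun n =>
        (decHull_sm' hKmeas (hψmem n)).measurable.nnnorm.coe_nnreal_ennreal.mono hG le_rfl
      have hψmono : ∀ n ω, (‖ψ n ω‖₊ : ℝ≥0∞) ≤ (‖ψ (n + 1) ω‖₊ : ℝ≥0∞) := fun n ω => by
        rw [hψennnorm n ω, hψennnorm (n + 1) ω]
        exact max_le_max (ennnorm_le_of_norm_le' (hφmono n ω)) (le_refl _)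
      have hsup : ∀ ω, (⨆ n, (‖ψ n ω‖₊ : ℝ≥0∞)) = max (Φ ω) (‖ζ ω‖₊ : ℝ≥0∞) := by
        intro ω
        simp_rw [hψennnorm]
        refine le_antisymm (iSup_le fun n =>
          max_le_max (le_iSup (fun k => (‖φ k ω‖₊ : ℝ≥0∞)) n) (le_refl _)) ?_
        refine max_le (iSup_le fun n => le_iSup_of_le n (le_max_left _ _))
          (le_iSup_of_le 0 (le_max_right _ _))
      have hEle : ∫⁻ ω, (max (Φ ω) (‖ζ ω‖₊ : ℝ≥0∞)) ^ p ∂μ ≤ s := by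
        calc ∫⁻ ω, (max (Φ ω) (‖ζ ω‖₊ : ℝ≥0∞)) ^ p ∂μ
            = ∫⁻ ω, (⨆ n, (‖ψ n ω‖₊ : ℝ≥0∞)) ^ p ∂μ := by simp_rw [hsup]
          _ = ⨆ n, I (ψ n) := lint_iSup_rpow' hp0 hψm hψmono
          _ ≤ s := iSup_le fun n => hIs _ (hψmem n)
      have hptle : ∀ ω, Φ ω ^ p ≤ (max (Φ ω) (‖ζ ω‖₊ : ℝ≥0∞)) ^ p := fun ω =>
        ENNReal.rpow_le_rpow (le_max_left _ _) hp0.le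
      have hEm : Measurable[mΩ] fun ω => (max (Φ ω) (‖ζ ω‖₊ : ℝ≥0∞)) ^ p :=
        ENNReal.continuous_rpow_const.measurable.comp
          (hΦm.max ((hKmeas ζ hζ).measurable.nnnorm.coe_nnreal_ennreal.mono hG le_rfl))
      have hsub0 := @lintegral_sub _ mΩ μ _ _ hΦpm hΦfin (ae_of_all μ hptle)
      have hsub : ∫⁻ ω, ((max (Φ ω) (‖ζ ω‖₊ : ℝ≥0∞)) ^ p - Φ ω ^ p) ∂μ = 0 := by
        rw [hsub0, hΦeq]
        exact tsub_eq_zero_of_le hEle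
      have hz := (lintegral_eq_zero_iff (hEm.sub hΦpm)).mp hsub
      filter_upwards [hz] with ω hω
      have : (max (Φ ω) (‖ζ ω‖₊ : ℝ≥0∞)) ^ p ≤ Φ ω ^ p := tsub_eq_zero_iff_le.mp hω
      have hle := (ENNReal.rpow_le_rpow_iff hp0).mp this
      exact le_trans (le_max_right _ _) hle
    refine ⟨fun ω => (Φ ω).toReal, ⟨?_, ?_⟩, ?_⟩
    · exact hΦm.ennreal_toReal.aestronglyMeasurable
    · rw [eLpNorm_eq_lintegral_rpow_enorm_toReal hq0 hqtop, hqto]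
      have hb : ∫⁻ ω, (‖(Φ ω).toReal‖₊ : ℝ≥0∞) ^ p ∂μ ≤ s := by
        refine le_trans (lintegral_mono fun ω => ?_) hΦeq.le
        refine ENNReal.rpow_le_rpow ?_ hp0.le
        change ‖(Φ ω).toReal‖ₑ ≤ Φ ω
        rw [Real.enorm_eq_ofReal ENNReal.toReal_nonneg]
        exact ENNReal.ofReal_toReal_le
      refine ENNReal.rpow_lt_top_of_nonneg (by positivity) ?_
      exact (lt_of_le_of_lt (hb.trans hsM) hM.lt_top).ne
    · intro ζ hζ
      filter_upwards [hdom ζ hζ, hΦlt] with ω h1 h2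
      have := ENNReal.toReal_mono h2.ne h1
      rwa [ENNReal.coe_toReal, coe_nnnorm] at this
end
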